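/- Let ḡ be an inner product on a finite-dimensional real vector space V, let q : ℝ → GL(V) be a differentiable curve, and set g_t(X,Y) := ḡ(q_t⁻¹X, q_t⁻¹Y). Let L_t be the unique g_t-symmetric endomorphism with (d/dt g_t)(X,Y) = 2 g_t(L_t X, Y). Then for every t, the endomorphism L_t + q_t' ∘ q_t⁻¹ is skew-symmetric with respect to g_t, i.e. g_t((L_t + q_t' q_t⁻¹)X, Y) = −g_t(X, (L_t + q_t' q_t⁻¹)Y) for all X,Y ∈ V. -/

import Mathlib

open scoped RealInnerProductSpace

/-- Let `ḡ` be an inner product on a finite-dimensional real vector space `V`, let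
`q : ℝ → GL(V)` be a differentiable curve, and set `g_t(X,Y) := ḡ(q_t⁻¹X, q_t⁻¹Y)`.
Let `L_t` be the unique `g_t`-symmetric endomorphism with
`(d/dt g_t)(X,Y) = 2 g_t(L_t X, Y)`. Then for every `t` the endomorphism
`L_t + q_t' ∘ q_t⁻¹` is skew-symmetric with respect to `g_t`. -/
theorem shape_operator_plus_gauge_is_skew
    (V : Type*) [NormedAddCommGroup V] [InnerProductSpace ℝ V] [FiniteDimensional ℝ V]
    -- the differentiable curve `q` in `GL(V)`, with inverses `qinv` and derivative `q'`
    (q qinv q' : ℝ → V →ₗ[ℝ] V)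
    (hqinv : ∀ t : ℝ, qinv t ∘ₗ q t = LinearMap.id ∧ q t ∘ₗ qinv t = LinearMap.id)
    (hq' : ∀ (t : ℝ) (X : V), HasDerivAt (fun s => q s X) (q' t X) t)
    -- `L_t` is `g_t`-symmetric and satisfies `g_t' = 2 g_t(L_t ·, ·)`,
    -- where `g_t(X,Y) := ⟪q_t⁻¹ X, q_t⁻¹ Y⟫`
    (L : ℝ → V →ₗ[ℝ] V)
    (hL_symm : ∀ (t : ℝ) (X Y : V),
      ⟪qinv t (L t X), qinv t Y⟫ = ⟪qinv t X, qinv t (L t Y)⟫)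
    (hL_deriv : ∀ (t : ℝ) (X Y : V),
      HasDerivAt (fun s => ⟪qinv s X, qinv s Y⟫)
        (2 * ⟪qinv t (L t X), qinv t Y⟫) t) :
    ∀ (t : ℝ) (X Y : V),
      ⟪qinv t ((L t + q' t ∘ₗ qinv t) X), qinv t Y⟫
        = -⟪qinv t X, qinv t ((L t + q' t ∘ₗ qinv t) Y)⟫ := by
  classical
  intro t X Y
  -- a basis of V
  set n := Module.finrank ℝ V
  let b : Module.Basis (Fin n) ℝ V := Module.finBasis ℝ V
  let coordL : Fin n → (V →L[ℝ] ℝ) := fun j => (b.coord j).toContinuousLinearMap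
  have hsum : ∀ T : V →ₗ[ℝ] V,
      (∑ j, (coordL j).smulRight (T (b j))) = T.toContinuousLinearMap := by
    intro T
    ext x
    simp only [ContinuousLinearMap.coe_sum', Finset.sum_apply,
      ContinuousLinearMap.smulRight_apply, LinearMap.coe_toContinuousLinearMap', coordL,
      LinearMap.coe_toContinuousLinearMap, Module.Basis.coord_apply]
    calc ∑ j, b.repr x j • T (b j) = T (∑ j, b.repr x j • b j) := by
          rw [map_sum]; simp [map_smul]
      _ = T x := by rw [b.sum_repr]
  -- derivative of q as an operator-valued curve
  have hQder : HasDerivAt (fun s => (q s).toContinuousLinearMap)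
      ((q' t).toContinuousLinearMap) t := by
    have h1 : HasDerivAt (fun s => ∑ j, (coordL j).smulRight (q s (b j)))
        (∑ j, (coordL j).smulRight (q' t (b j))) t := by
      refine HasDerivAt.fun_sum fun j _ => ?_
      exact (ContinuousLinearMap.smulRightL ℝ V V
        (coordL j)).hasFDerivAt.comp_hasDerivAt t (hq' t (b j))
    simpa only [hsum] using h1
  -- q t as a unit of the algebra of continuous endomorphisms
  let U : ℝ → (V →L[ℝ] V)ˣ := fun s =>
    { val := (q s).toContinuousLinearMap
      inv := (qinv s).toContinuousLinearMap
      val_inv := by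
        ext x
        simpa using LinearMap.congr_fun (hqinv s).2 x
      inv_val := by
        ext x
        simpa using LinearMap.congr_fun (hqinv s).1 x }
  have hinv : ∀ s : ℝ, Ring.inverse ((q s).toContinuousLinearMap)
      = (qinv s).toContinuousLinearMap := fun s => Ring.inverse_unit (U s)
  -- derivative of qinv as an operator-valued curve
  have hinvder : HasDerivAt (fun s => (qinv s).toContinuousLinearMap)
      (-((qinv t).toContinuousLinearMap * (q' t).toContinuousLinearMap
          * (qinv t).toContinuousLinearMap)) t := by
    have h2 := (hasFDerivAt_ringInverse (𝕜 := ℝ) (U t)).comp_hasDerivAt t hQder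
    simp only [Function.comp_def, hinv, ContinuousLinearMap.neg_apply,
      ContinuousLinearMap.mulLeftRight_apply] at h2
    exact h2
  -- pointwise derivative of qinv
  have hptw : ∀ Z : V, HasDerivAt (fun s => qinv s Z)
      (-(qinv t (q' t (qinv t Z)))) t := by
    intro Z
    have h3 := hinvder.clm_apply (hasDerivAt_const t Z)
    simpa using h3
  -- compare the two derivatives of g_t(X,Y)
  have hd := (hptw X).inner ℝ (hptw Y)
  have heq := (hL_deriv t X Y).unique hd
  simp only [inner_neg_left, inner_neg_right] at heq
  have hsymm := hL_symm t X Y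
  simp only [LinearMap.add_apply, LinearMap.comp_apply, map_add, inner_add_left,
    inner_add_right]
  linarith
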